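/- Let V be a real inner product space and let J(V) = ℝ × V carry the commutative bilinear product (α,v)∘(β,w) = (α·β + ⟪v,w⟫, α·w + β·v). An ℝ-linear endomorphism D of ℝ × V is a derivation of this product (D(p∘q) = D(p)∘q + p∘D(q) for all p,q) if and only if there is a skew-adjoint ℝ-linear map T : V → V (⟪T v, w⟫ + ⟪v, T w⟫ = 0 for all v,w) with D(α,v) = (0, T v) for all (α,v). Consequently the derivation algebra of J(V) is isomorphic, as a real Lie algebra, to the Lie algebra of skew-adjoint endomorphisms of V. -/

import Mathlib

variable (V : Type*) [NormedAddCommGroup V] [InnerProductSpace ℝ V]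

/-- The product of the Jordan algebra `J(V) = ℝ × V`:
`(α,v)∘(β,w) = (αβ + ⟪v,w⟫, αw + βv)`. -/
noncomputable def jmul (p q : ℝ × V) : ℝ × V :=
  (p.1 * q.1 + (inner ℝ p.2 q.2 : ℝ), p.1 • q.2 + q.1 • p.2)

variable {V}

lemma jmul_addl (p p' q : ℝ × V) : jmul V (p + p') q = jmul V p q + jmul V p' q := by
  unfold jmul
  refine Prod.ext ?_ ?_
  · simp only [Prod.fst_add, Prod.snd_add, inner_add_left]
    ring
  · simp only [Prod.fst_add, Prod.snd_add, Prod.mk_add_mk, add_smul, smul_add]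
    abel

lemma jmul_addr (p q q' : ℝ × V) : jmul V p (q + q') = jmul V p q + jmul V p q' := by
  unfold jmul
  refine Prod.ext ?_ ?_
  · simp only [Prod.fst_add, Prod.snd_add, inner_add_right]
    ring
  · simp only [Prod.fst_add, Prod.snd_add, Prod.mk_add_mk, add_smul, smul_add]
    abel

lemma jmul_subl (p p' q : ℝ × V) : jmul V (p - p') q = jmul V p q - jmul V p' q := by
  unfold jmul
  refine Prod.ext ?_ ?_
  · simp only [Prod.fst_sub, Prod.snd_sub, inner_sub_left, Prod.mk_sub_mk]
    ring
  · simp only [Prod.fst_sub, Prod.snd_sub, Prod.mk_sub_mk, sub_smul, smul_sub]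
    abel

lemma jmul_subr (p q q' : ℝ × V) : jmul V p (q - q') = jmul V p q - jmul V p q' := by
  unfold jmul
  refine Prod.ext ?_ ?_
  · simp only [Prod.fst_sub, Prod.snd_sub, inner_sub_right, Prod.mk_sub_mk]
    ring
  · simp only [Prod.fst_sub, Prod.snd_sub, Prod.mk_sub_mk, sub_smul, smul_sub]
    abel

lemma jmul_smull (r : ℝ) (p q : ℝ × V) : jmul V (r • p) q = r • jmul V p q := by
  unfold jmul
  refine Prod.ext ?_ ?_
  · simp only [Prod.smul_fst, Prod.smul_snd, inner_smul_left, RCLike.star_def,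
      starRingEnd_apply, star_trivial, smul_eq_mul]
    ring
  · show (r • p).1 • q.2 + q.1 • (r • p).2 = r • (p.1 • q.2 + q.1 • p.2)
    rw [Prod.smul_fst, Prod.smul_snd, smul_eq_mul, mul_smul, smul_comm q.1 r, smul_add]

lemma jmul_smulr (r : ℝ) (p q : ℝ × V) : jmul V p (r • q) = r • jmul V p q := by
  unfold jmul
  refine Prod.ext ?_ ?_
  · simp only [Prod.smul_fst, Prod.smul_snd, inner_smul_right, smul_eq_mul]
    ring
  · show p.1 • (r • q).2 + (r • q).1 • p.2 = r • (p.1 • q.2 + q.1 • p.2)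
    rw [Prod.smul_fst, Prod.smul_snd, smul_eq_mul, mul_smul, smul_comm p.1 r, smul_add]

variable (V)

attribute [local instance] LieRing.ofAssociativeRing

/-- The derivation algebra of `J(V)`, as a Lie subalgebra of the endomorphisms of
`ℝ × V` with the commutator bracket. -/
noncomputable def derJ : LieSubalgebra ℝ (Module.End ℝ (ℝ × V)) where
  carrier := {D | ∀ p q : ℝ × V, D (jmul V p q) = jmul V (D p) q + jmul V p (D q)}
  add_mem' := by
    intro D1 D2 h1 h2 p q
    simp only [LinearMap.add_apply, h1 p q, h2 p q, jmul_addl, jmul_addr]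
    abel
  zero_mem' := by
    intro p q
    simp only [LinearMap.zero_apply]
    have h1 : jmul V (0 : ℝ × V) q = 0 := by
      unfold jmul; simp
    have h2 : jmul V p (0 : ℝ × V) = 0 := by
      unfold jmul; simp
    rw [h1, h2, add_zero]
  smul_mem' := by
    intro r D hD p q
    simp only [LinearMap.smul_apply, hD p q, jmul_smull, jmul_smulr, smul_add]
  lie_mem' := by
    intro D1 D2 h1 h2 p q
    replace h1 : ∀ a b : ℝ × V, D1 (jmul V a b) = jmul V (D1 a) b + jmul V a (D1 b) := h1
    replace h2 : ∀ a b : ℝ × V, D2 (jmul V a b) = jmul V (D2 a) b + jmul V a (D2 b) := h2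
    simp only [Ring.lie_def, LinearMap.sub_apply, Module.End.mul_apply, h2, map_add, h1,
      jmul_subl, jmul_subr, jmul_addl, jmul_addr]
    abel

/-- The Lie algebra of skew-adjoint endomorphisms of `V`, with the commutator
bracket. -/
noncomputable def skewEnd : LieSubalgebra ℝ (Module.End ℝ V) where
  carrier := {T | ∀ v w : V, (inner ℝ (T v) w : ℝ) + (inner ℝ v (T w) : ℝ) = 0}
  add_mem' := by
    intro T S hT hS v w
    simp only [LinearMap.add_apply, inner_add_left, inner_add_right]
    have := hT v w
    have := hS v w
    linarith
  zero_mem' := by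
    intro v w
    simp
  smul_mem' := by
    intro r T hT v w
    simp only [LinearMap.smul_apply, inner_smul_left, inner_smul_right,
      RCLike.star_def, starRingEnd_apply, star_trivial, smul_eq_mul]
    linear_combination r * hT v w
  lie_mem' := by
    intro T S hT hS v w
    simp only [Ring.lie_def, LinearMap.sub_apply, Module.End.mul_apply, inner_sub_left,
      inner_sub_right]
    have h1 := hT (S v) w
    have h2 := hS v (T w)
    have h3 := hS (T v) w
    have h4 := hT v (S w)
    linarith

variable {V}

lemma jmul_one_right (q : ℝ × V) : jmul V q ((1:ℝ), (0:V)) = q := by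
  unfold jmul; simp

lemma jmul_one_left (q : ℝ × V) : jmul V ((1:ℝ), (0:V)) q = q := by
  unfold jmul; simp

lemma der_iff (D : (ℝ × V) →ₗ[ℝ] (ℝ × V)) :
    (∀ p q : ℝ × V, D (jmul V p q) = jmul V (D p) q + jmul V p (D q)) ↔
      ∃ T : V →ₗ[ℝ] V, (∀ v w : V, (inner ℝ (T v) w : ℝ) + (inner ℝ v (T w) : ℝ) = 0) ∧
        ∀ p : ℝ × V, D p = (0, T p.2) := by
  constructor
  · intro hD
    have he : D ((1:ℝ), (0:V)) = 0 := by
      have h := hD ((1:ℝ), (0:V)) ((1:ℝ), (0:V))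
      rw [jmul_one_left, jmul_one_right, jmul_one_left] at h
      have h2 : D ((1:ℝ), (0:V)) + 0 = D ((1:ℝ), (0:V)) + D ((1:ℝ), (0:V)) := by
        rw [add_zero]; exact h
      exact (add_left_cancel h2).symm
    have hzero : ∀ v w : V, D (jmul V ((0:ℝ), v) ((0:ℝ), w)) = 0 := by
      intro v w
      have : jmul V ((0:ℝ), v) ((0:ℝ), w) = (inner ℝ v w : ℝ) • ((1:ℝ), (0:V)) := by
        unfold jmul; simp
      rw [this, map_smul, he, smul_zero]
    have hkey : ∀ v w : V,
        (0 : ℝ × V) = jmul V (D (0, v)) (0, w) + jmul V (0, v) (D (0, w)) := by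
      intro v w
      rw [← hD (0, v) (0, w), hzero]
    have hfst_eq : ∀ v w : V,
        (0:ℝ) = (inner ℝ (D (0, v)).2 w : ℝ) + (inner ℝ v (D (0, w)).2 : ℝ) := by
      intro v w
      have h := congrArg Prod.fst (hkey v w)
      unfold jmul at h
      simpa using h
    have hsnd_eq : ∀ v w : V,
        (0 : V) = (D (0, v)).1 • w + (D (0, w)).1 • v := by
      intro v w
      have h := congrArg Prod.snd (hkey v w)
      unfold jmul at h
      simpa using h
    have hfst : ∀ v : V, (D ((0:ℝ), v)).1 = 0 := by
      intro v
      by_cases hv : v = 0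
      · subst hv
        have : ((0:ℝ), (0:V)) = (0 : ℝ × V) := rfl
        rw [this, map_zero]
        rfl
      · have h := (hsnd_eq v v).symm
        rw [← two_smul ℝ ((D ((0:ℝ), v)).1 • v), smul_smul] at h
        rcases smul_eq_zero.mp h with h1 | h1
        · have : (D ((0:ℝ), v)).1 = 0 := by linarith [h1]
          exact this
        · exact absurd h1 hv
    refine ⟨(LinearMap.snd ℝ ℝ V) ∘ₗ D ∘ₗ (LinearMap.inr ℝ ℝ V), ?_, ?_⟩
    · intro v w
      exact (hfst_eq v w).symm
    · intro p
      have hp : p = p.1 • ((1:ℝ), (0:V)) + ((0:ℝ), p.2) := by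
        apply Prod.ext <;> simp
      conv_lhs => rw [hp, map_add, map_smul, he, smul_zero, zero_add]
      apply Prod.ext
      · simpa using hfst p.2
      · rfl
  · rintro ⟨T, hT, hDT⟩ p q
    rw [hDT, hDT, hDT]
    unfold jmul
    apply Prod.ext
    · show (0:ℝ) = ((0:ℝ) * q.1 + (inner ℝ (T p.2) q.2 : ℝ)) + (p.1 * 0 + (inner ℝ p.2 (T q.2) : ℝ))
      have := hT p.2 q.2
      linarith
    · simp only [map_add, map_smul, Prod.snd]
      show p.1 • T q.2 + q.1 • T p.2 = (0 • q.2 + q.1 • T p.2) + (p.1 • T q.2 + 0 • p.2)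
      simp only [zero_smul, zero_add, add_zero]
      abel

variable (V)

/-- The Lie algebra homomorphism from skew-adjoint endomorphisms to derivations. -/
noncomputable def skewToDer : skewEnd V →ₗ⁅ℝ⁆ derJ V where
  toFun T := ⟨(LinearMap.inr ℝ ℝ V) ∘ₗ (T : Module.End ℝ V) ∘ₗ (LinearMap.snd ℝ ℝ V), by
    have := (der_iff ((LinearMap.inr ℝ ℝ V) ∘ₗ (T : Module.End ℝ V) ∘ₗ (LinearMap.snd ℝ ℝ V))).mpr
      ⟨T.1, T.2, fun p => rfl⟩
    exact this⟩
  map_add' T S := by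
    apply Subtype.ext
    apply LinearMap.ext
    intro p
    show ((0:ℝ), (T.1 + S.1) p.2) = ((0:ℝ), T.1 p.2) + ((0:ℝ), S.1 p.2)
    simp [Prod.ext_iff]
  map_smul' r T := by
    apply Subtype.ext
    apply LinearMap.ext
    intro p
    show ((0:ℝ), (r • T.1) p.2) = r • ((0:ℝ), T.1 p.2)
    simp [Prod.ext_iff]
  map_lie' {T S} := by
    apply Subtype.ext
    apply LinearMap.ext
    intro p
    show ((0:ℝ), (T.1 * S.1 - S.1 * T.1 : Module.End ℝ V) p.2)
      = ((0:ℝ), T.1 ((0:ℝ), S.1 p.2).2) - ((0:ℝ), S.1 ((0:ℝ), T.1 p.2).2)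
    simp [LinearMap.sub_apply, Module.End.mul_apply, Prod.mk_sub_mk]

lemma skewToDer_bijective : Function.Bijective (skewToDer V) := by
  constructor
  · intro T S h
    apply Subtype.ext
    apply LinearMap.ext
    intro v
    have := congrArg (fun D => ((D : derJ V) : Module.End ℝ (ℝ × V)) ((0:ℝ), v)) h
    exact congrArg Prod.snd this
  · rintro ⟨D, hD⟩
    obtain ⟨T, hT, hDT⟩ := (der_iff D).mp hD
    refine ⟨⟨T, hT⟩, ?_⟩
    apply Subtype.ext
    apply LinearMap.ext
    intro p
    exact (hDT p).symm


/-- An endomorphism `D` of `ℝ × V` is a derivation of `J(V)` iff `D(α,v) = (0, Tv)`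
for a skew-adjoint `T : V → V`; consequently the derivation algebra of `J(V)` is
isomorphic, as a real Lie algebra, to the Lie algebra of skew-adjoint endomorphisms
of `V`. -/
theorem statement15 :
    (∀ D : (ℝ × V) →ₗ[ℝ] (ℝ × V),
      (∀ p q : ℝ × V, D (jmul V p q) = jmul V (D p) q + jmul V p (D q)) ↔
        ∃ T : V →ₗ[ℝ] V, (∀ v w : V, (inner ℝ (T v) w : ℝ) + (inner ℝ v (T w) : ℝ) = 0) ∧
          ∀ p : ℝ × V, D p = (0, T p.2))
    ∧ Nonempty (derJ V ≃ₗ⁅ℝ⁆ skewEnd V) := by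
  refine ⟨fun D => der_iff D, ⟨(LieEquiv.ofBijective (skewToDer V) (skewToDer_bijective V)).symm⟩⟩
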